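/- Let x : [0,∞) → ℝ^N be any continuous function and let ω_ij : [0,∞) → ℝ be differentiable and satisfy the Hebbian weight equation ω_ij'(t) = (1/B)·(−ω_ij(t) + F(x_i(t))·F(x_j(t))) for all t ≥ 0. If |ω_ij(0)| < 1, then |ω_ij(t)| < 1 for all t ≥ 0; that is, the open box |ω_ij| < 1 in weight space is forward invariant under Hebbian learning. -/

import Mathlib

open Real

noncomputable def F (lam s : ℝ) : ℝ := (2 / Real.pi) * Real.arctan (lam * Real.pi * s / 2)

lemma F_abs_lt_one (lam s : ℝ) : |F lam s| < 1 := by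
  have hpi := Real.pi_pos
  rw [F, abs_mul, abs_of_pos (by positivity : (0:ℝ) < 2 / Real.pi)]
  have h1 : |Real.arctan (lam * Real.pi * s / 2)| < Real.pi / 2 := by
    rw [abs_lt]
    exact ⟨Real.neg_pi_div_two_lt_arctan _, Real.arctan_lt_pi_div_two _⟩
  calc 2 / Real.pi * |Real.arctan (lam * Real.pi * s / 2)|
      < 2 / Real.pi * (Real.pi / 2) := by
        apply mul_lt_mul_of_pos_left h1 (by positivity)
    _ = 1 := by field_simp

lemma aux_lt_one (B : ℝ) (hB : 0 < B) (w c : ℝ → ℝ) (hc : ∀ t, c t < 1)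
    (hw : ∀ t ≥ (0:ℝ), HasDerivAt w ((1 / B) * (-(w t) + c t)) t)
    (h0 : w 0 < 1) : ∀ t ≥ (0:ℝ), w t < 1 := by
  set g : ℝ → ℝ := fun t => Real.exp (t / B) * (1 - w t) with hgdef
  have hg : ∀ t ≥ (0:ℝ), HasDerivAt g (Real.exp (t / B) * (1 / B) * (1 - c t)) t := by
    intro t ht
    have hexp : HasDerivAt (fun t => Real.exp (t / B)) (Real.exp (t / B) * (1 / B)) t :=
      by have := (Real.hasDerivAt_exp (t / B)).comp t ((hasDerivAt_id t).div_const B); exact this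
    have := hexp.mul ((hw t ht).const_sub 1)
    exact this.congr_deriv (by ring)
  have hmono : StrictMonoOn g (Set.Ici 0) := by
    apply strictMonoOn_of_deriv_pos (convex_Ici 0)
    · intro t ht
      exact (hg t ht).continuousAt.continuousWithinAt
    · intro t ht
      rw [interior_Ici] at ht
      rw [(hg t (le_of_lt ht)).deriv]
      have := hc t
      have h2 : (0:ℝ) < 1 - c t := by linarith
      positivity
  intro t ht
  have hgt : 0 < g t := by
    rcases eq_or_lt_of_le ht with h | h
    · have : g 0 = 1 - w 0 := by simp [hgdef]
      rw [← h, this]; linarith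
    · have h1 : g 0 < g t := hmono (le_refl (0:ℝ)) (le_of_lt h) h
      have : g 0 = 1 - w 0 := by simp [hgdef]
      rw [this] at h1; linarith
  have hep : 0 < Real.exp (t / B) := Real.exp_pos _
  simp only [hgdef] at hgt
  nlinarith

/-- Under the Hebbian weight equation, the open box |ω_ij| < 1 in weight
space is forward invariant: if |ω_ij(0)| < 1 then |ω_ij(t)| < 1 for all t ≥ 0. -/
theorem hebbian_weight_box_forward_invariant (N : ℕ) (hN : 1 ≤ N) (lam B : ℝ)
    (hlam : 0 < lam) (hB : 0 < B)
    (x : ℝ → Fin N → ℝ) (hx : Continuous x)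
    (i j : Fin N) (w : ℝ → ℝ)
    (hw : ∀ t ≥ (0 : ℝ), HasDerivAt w ((1 / B) * (-(w t) + F lam (x t i) * F lam (x t j))) t)
    (h0 : |w 0| < 1) :
    ∀ t ≥ (0 : ℝ), |w t| < 1 := by
  set c : ℝ → ℝ := fun t => F lam (x t i) * F lam (x t j) with hcdef
  have hc : ∀ t, |c t| < 1 := by
    intro t
    rw [hcdef]
    calc |F lam (x t i) * F lam (x t j)| = |F lam (x t i)| * |F lam (x t j)| := abs_mul _ _
      _ < 1 := by
        have h1 := F_abs_lt_one lam (x t i)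
        have h2 := F_abs_lt_one lam (x t j)
        nlinarith [abs_nonneg (F lam (x t i)), abs_nonneg (F lam (x t j))]
  rw [abs_lt] at h0
  intro t ht
  rw [abs_lt]
  constructor
  · have := aux_lt_one B hB (fun t => -(w t)) (fun t => -(c t))
      (fun t => show -(c t) < 1 by have := (abs_lt.mp (hc t)).1; linarith)
      (fun t ht => by
        have := (hw t ht).neg
        exact this.congr_deriv (by ring))
      (show -(w 0) < 1 by linarith [h0.1]) t ht
    have h3 : -(w t) < 1 := this
    linarith
  · exact aux_lt_one B hB w c (fun t => (abs_lt.mp (hc t)).2) hw h0.2 t ht
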